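/- Let p ∈ (1,2] and δ ≥ 0. Then for all λ ≥ 0 and all t ≥ 0 one has φ(λ·t) ≤ max{λ^p, λ²}·φ(t); in particular φ(λ·t) ≤ max{1, λ²}·φ(t). -/

import Mathlib

open MeasureTheory intervalIntegral

/-- The N-function `φ = φ_{p,δ}`, `φ(t) = ∫₀ᵗ (δ+s)^(p-2)·s ds`. -/
noncomputable def phiFun (p δ t : ℝ) : ℝ := ∫ s in (0:ℝ)..t, (δ + s) ^ (p - 2) * s

lemma phi_integrand_integrable (p δ t : ℝ) (hp : 1 < p) (hp2 : p ≤ 2) (hδ : 0 ≤ δ)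
    (ht : 0 ≤ t) :
    IntervalIntegrable (fun s : ℝ => (δ + s) ^ (p - 2) * s) volume 0 t := by
  rw [intervalIntegrable_iff_integrableOn_Ioc_of_le ht]
  apply Measure.integrableOn_of_bounded (M := t ^ (p - 1))
  · simp
  · exact (by fun_prop : Measurable (fun s : ℝ => (δ + s) ^ (p - 2) * s)).aestronglyMeasurable
  · filter_upwards [MeasureTheory.ae_restrict_mem measurableSet_Ioc] with x hx
    have hx0 : 0 < x := hx.1
    have h1 : (δ + x) ^ (p - 2) ≤ x ^ (p - 2) :=
      Real.rpow_le_rpow_of_nonpos hx0 (by linarith) (by linarith)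
    have h2 : (δ + x) ^ (p - 2) * x ≤ x ^ (p - 1) := by
      calc (δ + x) ^ (p - 2) * x ≤ x ^ (p - 2) * x := by
            exact mul_le_mul_of_nonneg_right h1 hx0.le
        _ = x ^ (p - 1) := by
            rw [← Real.rpow_add_one hx0.ne' (p-2)]; ring_nf
    have hnn : 0 ≤ (δ + x) ^ (p - 2) * x :=
      mul_nonneg (Real.rpow_nonneg (by linarith) _) hx0.le
    rw [Real.norm_eq_abs, abs_of_nonneg hnn]
    exact h2.trans (Real.rpow_le_rpow hx0.le hx.2 (by linarith))

lemma phiFun_nonneg (p δ t : ℝ) (hδ : 0 ≤ δ) (ht : 0 ≤ t) : 0 ≤ phiFun p δ t := by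
  apply intervalIntegral.integral_nonneg ht
  intro u hu
  exact mul_nonneg (Real.rpow_nonneg (by linarith [hu.1]) _) hu.1

/-- For `p ∈ (1,2]` and `δ ≥ 0`, for all `λ ≥ 0` and `t ≥ 0` one has
`φ(λ·t) ≤ max{λ^p, λ²}·φ(t)`, and in particular `φ(λ·t) ≤ max{1, λ²}·φ(t)`. -/
theorem phi_scaling (p δ : ℝ) (hp : 1 < p) (hp2 : p ≤ 2) (hδ : 0 ≤ δ)
    (lam t : ℝ) (hlam : 0 ≤ lam) (ht : 0 ≤ t) :
    phiFun p δ (lam * t) ≤ max (lam ^ p) (lam ^ (2:ℝ)) * phiFun p δ t ∧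
      phiFun p δ (lam * t) ≤ max 1 (lam ^ (2:ℝ)) * phiFun p δ t := by
  have hφt : 0 ≤ phiFun p δ t := phiFun_nonneg p δ t hδ ht
  have key : phiFun p δ (lam * t) ≤ max (lam ^ p) (lam ^ (2:ℝ)) * phiFun p δ t := by
    rcases eq_or_lt_of_le hlam with h0 | hlam0
    · subst h0
      simp only [zero_mul, phiFun, intervalIntegral.integral_same]
      positivity
    -- λ > 0
    have hsub : phiFun p δ (lam * t)
        = ∫ u in (0:ℝ)..t, lam * ((δ + lam * u) ^ (p - 2) * (lam * u)) := by
      have h := intervalIntegral.smul_integral_comp_mul_left (a := 0) (b := t)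
        (fun s => (δ + s) ^ (p - 2) * s) lam
      rw [mul_zero] at h
      rw [phiFun, ← h, smul_eq_mul, ← intervalIntegral.integral_const_mul]
    rw [hsub, phiFun, ← intervalIntegral.integral_const_mul]
    apply intervalIntegral.integral_mono_on ht
    · have := (phi_integrand_integrable p δ (lam * t) hp hp2 hδ (by positivity)).comp_mul_left (c := lam)
      simp only [mul_zero, zero_div, mul_div_cancel_left₀ _ hlam0.ne'] at this
      exact (this.const_mul lam)
    · exact (phi_integrand_integrable p δ t hp hp2 hδ ht).const_mul _
    · intro u hu
      have hu0 : 0 ≤ u := hu.1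
      rcases eq_or_lt_of_le hu0 with h0u | hu0'
      · simp [← h0u]
      have hδu : 0 < δ + u := by linarith
      have lhs_eq : lam * ((δ + lam * u) ^ (p - 2) * (lam * u))
          = lam ^ (2:ℝ) * ((δ + lam * u) ^ (p - 2) * u) := by
        rw [show (2:ℝ) = (1:ℝ) + 1 by norm_num, Real.rpow_add hlam0,
          Real.rpow_one]
        ring
      rw [lhs_eq]
      rcases le_total lam 1 with hl1 | hl1
      · -- use λ^p
        have hmono : (δ + lam * u) ^ (p - 2) ≤ (lam * (δ + u)) ^ (p - 2) := by
          apply Real.rpow_le_rpow_of_nonpos (by positivity) (by nlinarith) (by linarith)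
        have : lam ^ (2:ℝ) * ((δ + lam * u) ^ (p - 2) * u)
            ≤ lam ^ p * ((δ + u) ^ (p - 2) * u) := by
          calc lam ^ (2:ℝ) * ((δ + lam * u) ^ (p - 2) * u)
              ≤ lam ^ (2:ℝ) * ((lam * (δ + u)) ^ (p - 2) * u) := by
                apply mul_le_mul_of_nonneg_left
                  (mul_le_mul_of_nonneg_right hmono hu0) (Real.rpow_nonneg hlam _)
            _ = lam ^ p * ((δ + u) ^ (p - 2) * u) := by
                rw [Real.mul_rpow hlam hδu.le, ← mul_assoc, ← mul_assoc,
                  ← Real.rpow_add hlam0]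
                norm_num [mul_assoc]
        exact this.trans (mul_le_mul_of_nonneg_right (le_max_left _ _)
          (mul_nonneg (Real.rpow_nonneg hδu.le _) hu0))
      · -- λ ≥ 1, use λ²
        have hmono : (δ + lam * u) ^ (p - 2) ≤ (δ + u) ^ (p - 2) := by
          apply Real.rpow_le_rpow_of_nonpos hδu (by nlinarith) (by linarith)
        have : lam ^ (2:ℝ) * ((δ + lam * u) ^ (p - 2) * u)
            ≤ lam ^ (2:ℝ) * ((δ + u) ^ (p - 2) * u) :=
          mul_le_mul_of_nonneg_left (mul_le_mul_of_nonneg_right hmono hu0)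
            (Real.rpow_nonneg hlam _)
        exact this.trans (mul_le_mul_of_nonneg_right (le_max_right _ _)
          (mul_nonneg (Real.rpow_nonneg hδu.le _) hu0))
  refine ⟨key, key.trans ?_⟩
  apply mul_le_mul_of_nonneg_right _ hφt
  apply max_le _ (le_max_right _ _)
  rcases le_total lam 1 with h | h
  · exact le_max_of_le_left (Real.rpow_le_one hlam h (by linarith))
  · exact le_max_of_le_right (Real.rpow_le_rpow_of_exponent_le h hp2)
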